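/- Let M be a matching in a graph G on an even number n of vertices with 2|M| < n, let a be a vertex unmatched by M, and let B be a graph on the same vertex set with maximum degree at most (1 − ε/4)n that contains no complete bipartite subgraph with parts of sizes (ε/8)n and l. Suppose 2|M| ≥ n − k where k = O(log n), the set L of unmatched vertices other than a has |L| ≥ l, and define X_a = {u : au ∉ B, au ∉ M-edges} and X_a^+ = {v : ∃u ∈ X_a, uv ∈ M}. If |X_a^+| ≥ (ε/8)n, then there exists an edge between L and X_a^+ that is not in B. -/
import Mathlib


/-- let `M` be a matching in Maker's graph on an even number `n` of vertices with
`n - k ≤ 2|M| < n` (where `k = O(log n)`), let `a` be an unmatched vertex, and let `B` be a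
graph on the same vertex set with maximum degree at most `(1 - ε/4)n` containing no complete
bipartite subgraph with parts of sizes `(ε/8)n` and `l`. Let `L` be the set of unmatched
vertices other than `a`, with `|L| ≥ l`; let `X_a` be the set of vertices `u` with `au` vacant
(not in `B` and not a matching edge) and `X_a⁺` the set of `M`-partners of vertices of `X_a`.
If `|X_a⁺| ≥ (ε/8)n`, then there is an edge between `L` and `X_a⁺` not in `B`. -/
theorem stmt_12 {V : Type*} [Fintype V] [DecidableEq V] (n k l : ℕ)
    (hcard : Fintype.card V = n) (heven : Even n)
    (ε : ℝ) (hε : 0 < ε)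
    (M : Finset (Sym2 V))
    (hM1 : ∀ e ∈ M, ¬ e.IsDiag)
    (hM2 : ∀ e ∈ M, ∀ f ∈ M, e ≠ f → ∀ v, v ∈ e → v ∉ f)
    (hMlt : 2 * M.card < n) (hMge : n - k ≤ 2 * M.card)
    (a : V) (ha : ∀ e ∈ M, a ∉ e)
    (B : SimpleGraph V) [DecidableRel B.Adj]
    (hdeg : ∀ v : V, (B.degree v : ℝ) ≤ (1 - ε / 4) * n)
    (hnobip : ¬ ∃ A C : Finset V, Disjoint A C ∧ ε / 8 * (n : ℝ) ≤ (A.card : ℝ) ∧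
      l ≤ C.card ∧ ∀ x ∈ A, ∀ y ∈ C, B.Adj x y)
    (L : Finset V) (hL : ∀ v : V, v ∈ L ↔ v ≠ a ∧ ∀ e ∈ M, v ∉ e)
    (hLcard : l ≤ L.card)
    (Xa : Finset V) (hXa : ∀ u : V, u ∈ Xa ↔ u ≠ a ∧ ¬ B.Adj a u ∧ s(a, u) ∉ M)
    (Xplus : Finset V) (hXplus : ∀ v : V, v ∈ Xplus ↔ ∃ u ∈ Xa, s(u, v) ∈ M)
    (hXcard : ε / 8 * (n : ℝ) ≤ (Xplus.card : ℝ)) :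
    ∃ x ∈ L, ∃ y ∈ Xplus, x ≠ y ∧ ¬ B.Adj x y := by
  by_contra hcon
  push_neg at hcon
  have hdisj : Disjoint Xplus L := by
    rw [Finset.disjoint_left]
    intro v hv hvL
    obtain ⟨u, hu, huv⟩ := (hXplus v).mp hv
    exact ((hL v).mp hvL).2 _ huv (Sym2.mem_mk_right u v)
  apply hnobip
  refine ⟨Xplus, L, hdisj, hXcard, hLcard, ?_⟩
  intro x hx y hy
  have hne : y ≠ x := fun h => Finset.disjoint_left.mp hdisj hx (h ▸ hy)
  exact (hcon y hy x hx hne).symm
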